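/- Let n1,n2,α0,α1,α2 ∈ ℂ with n1·n2 = 4 and δ := 4α0 + 2n1α1 − (n1+2)α2 ≠ 0. Let U ⊆ ℂ be open with 0 ∉ U, and let x, y : ℂ → ℂ be differentiable on U with y(t) ≠ 0 for t ∈ U, satisfying the generalized Painlevé III system with parameters (n1,n2; α0,α1,α2) on U. Then x̃ := x + α2/y and ỹ := y satisfy the generalized Painlevé III system on U with parameters (n1,n2; α0+α2−n1α2, α1+α2−n2α2, −α2), provided the quantity δ formed from these new parameters is nonzero. -/
import Mathlib


/-- The constant `δ` of the generalized Painlevé III system. -/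
noncomputable def piiiDelta (n1 b0 b1 b2 : ℂ) : ℂ :=
  4 * b0 + 2 * n1 * b1 - (n1 + 2) * b2

/-- `x, y : ℂ → ℂ` are differentiable on `U` and satisfy the generalized
Painlevé III system with parameters `(n1,n2; b0,b1,b2)` on `U`. -/
def PIIISystem (n1 n2 b0 b1 b2 : ℂ) (U : Set ℂ) (x y : ℂ → ℂ) : Prop :=
  DifferentiableOn ℂ x U ∧ DifferentiableOn ℂ y U ∧
  ∀ t ∈ U,
    (piiiDelta n1 b0 b1 b2 * t * deriv x t =
      -(n1 + 2) * (x t) ^ 2 * y t + 2 * (x t) ^ 2 + 2 * (n1 * b1 - 2 * b2) * x t - n1 * t)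
    ∧
    (piiiDelta n1 b0 b1 b2 * t * deriv y t =
      4 * x t * (y t) ^ 2 - 4 * x t * y t - (2 * n1 * b1 + (n1 - 6) * b2) * y t - 2 * b2)

/-- Birational symmetry `s` of the generalized Painlevé III system:
`(x, y) ↦ (x + α2/y, y)` with parameters `(n1,n2; α0+α2−n1α2, α1+α2−n2α2, −α2)`. -/
theorem piii_symmetry_s (n1 n2 a0 a1 a2 : ℂ)
    (hrel : n1 * n2 = 4)
    (hδ : piiiDelta n1 a0 a1 a2 ≠ 0)
    (U : Set ℂ) (hU : IsOpen U) (h0U : (0 : ℂ) ∉ U)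
    (x y : ℂ → ℂ) (hy : ∀ t ∈ U, y t ≠ 0)
    (hxy : PIIISystem n1 n2 a0 a1 a2 U x y)
    (hδ' : piiiDelta n1 (a0 + a2 - n1 * a2) (a1 + a2 - n2 * a2) (-a2) ≠ 0) :
    PIIISystem n1 n2 (a0 + a2 - n1 * a2) (a1 + a2 - n2 * a2) (-a2) U
      (fun t => x t + a2 / y t) y := by
  obtain ⟨hx, hy', heq⟩ := hxy
  have hδeq : piiiDelta n1 (a0 + a2 - n1 * a2) (a1 + a2 - n2 * a2) (-a2) =
      piiiDelta n1 a0 a1 a2 := by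
    unfold piiiDelta; linear_combination (-2 * a2) * hrel
  refine ⟨hx.add ((differentiableOn_const a2).div hy' hy), hy', ?_⟩
  intro t ht
  obtain ⟨e1, e2⟩ := heq t ht
  have hyt0 := hy t ht
  have h2 : (y t) ^ 2 ≠ 0 := pow_ne_zero 2 hyt0
  have hxd : HasDerivAt x (deriv x t) t :=
    (hx.differentiableAt (hU.mem_nhds ht)).hasDerivAt
  have hyd : HasDerivAt y (deriv y t) t :=
    (hy'.differentiableAt (hU.mem_nhds ht)).hasDerivAt
  have hd : HasDerivAt (fun t => x t + a2 / y t)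
      (deriv x t + (0 * y t - a2 * deriv y t) / (y t) ^ 2) t :=
    hxd.add ((hasDerivAt_const t a2).div hyd hyt0)
  have hA : (0 * y t - a2 * deriv y t) / (y t) ^ 2 * (y t) ^ 2
      = 0 * y t - a2 * deriv y t := div_mul_cancel₀ _ h2
  have hB : a2 / y t * y t = a2 := div_mul_cancel₀ _ hyt0
  rw [hδeq] at hδ' ⊢
  constructor
  · rw [hd.deriv]
    apply mul_right_cancel₀ h2
    linear_combination (y t) ^ 2 * e1 - a2 * e2 +
      (2 * a2 * x t * (y t) ^ 2 + 2 * a2 ^ 2 * y t) * hrel +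
      (piiiDelta n1 a0 a1 a2) * t * hA +
      (-(-(n1 + 2) * (y t) * (2 * x t * y t + (a2 / y t) * y t + a2)
        + 2 * (2 * x t * y t + (a2 / y t) * y t + a2)
        + 2 * (n1 * (a1 + a2 - n2 * a2) - 2 * (-a2)) * (y t))) * hB
  · linear_combination e2 - 2 * a2 * (y t) * hrel + (4 - 4 * y t) * hB
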